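/- Let x_1,...,x_n be natural numbers with sum X and each x_i ≤ x, and let k be a positive natural number. Then there exists a partition of [1..n] into k sets I_1,...,I_k, each consisting of consecutive elements, such that for each j, the sum of x_i over i in I_j is at most X/k + x. -/

import Mathlib

private def pS (x : ℕ → ℕ) (m : ℕ) : ℕ := ∑ i ∈ Finset.Ioc 0 m, x i

private def pf (x : ℕ → ℕ) (n k X : ℕ) (j : ℕ) : ℕ :=
  if j = 0 then 0 else Nat.findGreatest (fun m => k * pS x m ≤ j * X) n

private lemma pS_zero (x : ℕ → ℕ) : pS x 0 = 0 := by simp [pS]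

private lemma pS_succ (x : ℕ → ℕ) (m : ℕ) : pS x (m + 1) = pS x m + x (m + 1) := by
  simp [pS, Finset.sum_Ioc_succ_top (Nat.zero_le m)]

private lemma pP_zero (x : ℕ → ℕ) (k X j : ℕ) : k * pS x 0 ≤ j * X := by
  rw [pS_zero, Nat.mul_zero]; exact Nat.zero_le _

private lemma pf_le (x : ℕ → ℕ) (n k X j : ℕ) : pf x n k X j ≤ n := by
  unfold pf; split
  · exact Nat.zero_le n
  · exact Nat.findGreatest_le n

private lemma pf_spec (x : ℕ → ℕ) (n k X j : ℕ) :
    k * pS x (pf x n k X j) ≤ j * X := by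
  unfold pf; split
  · exact pP_zero x k X j
  · exact Nat.findGreatest_spec (P := fun m => k * pS x m ≤ j * X)
      (Nat.zero_le n) (pP_zero x k X j)

private lemma pf_mono (x : ℕ → ℕ) (n k X : ℕ) {j j' : ℕ} (h : j ≤ j') :
    pf x n k X j ≤ pf x n k X j' := by
  unfold pf
  split
  · exact Nat.zero_le _
  · split
    · omega
    · have hspec : k * pS x (Nat.findGreatest (fun m => k * pS x m ≤ j * X) n) ≤ j * X :=
        Nat.findGreatest_spec (P := fun m => k * pS x m ≤ j * X)
          (Nat.zero_le n) (pP_zero x k X j)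
      exact Nat.le_findGreatest (P := fun m => k * pS x m ≤ j' * X)
        (Nat.findGreatest_le n)
        (le_trans hspec (Nat.mul_le_mul_right X h))

private lemma pf_max (x : ℕ → ℕ) (n k X : ℕ) {j : ℕ} (hj : j ≠ 0)
    (h : pf x n k X j < n) : j * X < k * pS x (pf x n k X j + 1) := by
  have hj' : pf x n k X j = Nat.findGreatest (fun m => k * pS x m ≤ j * X) n := by
    unfold pf; simp [hj]
  rw [hj'] at h ⊢
  have hng := Nat.findGreatest_is_greatest (P := fun m => k * pS x m ≤ j * X)
    (n := n) (k := Nat.findGreatest (fun m => k * pS x m ≤ j * X) n + 1)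
    (by omega) (by omega)
  simp only [not_le] at hng
  exact hng

theorem stmt0 (n k : ℕ) (hk : 0 < k) (x : ℕ → ℕ) (xb X : ℕ)
    (hX : ∑ i ∈ Finset.Icc 1 n, x i = X)
    (hb : ∀ i ∈ Finset.Icc 1 n, x i ≤ xb) :
    ∃ I : Fin k → Finset ℕ,
      (∀ j, ∃ a b, I j = Finset.Icc a b) ∧
      (∀ j j', j ≠ j' → Disjoint (I j) (I j')) ∧
      (Finset.univ.biUnion I = Finset.Icc 1 n) ∧
      (∀ j, (∑ i ∈ I j, (x i : ℝ)) ≤ (X : ℝ) / k + xb) := by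
  set f : ℕ → ℕ := pf x n k X with hf
  have hIcc : ∀ m, Finset.Icc 1 m = Finset.Ioc 0 m := by
    intro m; ext i; simp [Nat.lt_iff_add_one_le]
  have hSn : pS x n = X := by rw [pS, ← hIcc]; exact hX
  have hfk : f k = n := by
    have h1 : f k ≤ n := pf_le x n k X k
    have h2 : n ≤ f k := by
      rw [hf]; unfold pf; simp only [hk.ne', if_false]
      exact Nat.le_findGreatest (P := fun m => k * pS x m ≤ k * X) le_rfl (show k * pS x n ≤ k * X by rw [hSn])
    omega
  have hf0 : f 0 = 0 := by rw [hf]; unfold pf; simp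
  have hsum : ∀ a b : ℕ, a ≤ b → ∑ i ∈ Finset.Icc (a+1) b, x i = pS x b - pS x a := by
    intro a b hab
    have hc : pS x a + ∑ i ∈ Finset.Ioc a b, x i = pS x b :=
      Finset.sum_Ioc_consecutive x (Nat.zero_le a) hab
    have he : Finset.Icc (a+1) b = Finset.Ioc a b := by
      ext i; simp only [Finset.mem_Icc, Finset.mem_Ioc]; omega
    rw [he]; omega
  refine ⟨fun j => Finset.Icc (f j.val + 1) (f (j.val + 1)), ?_, ?_, ?_, ?_⟩
  · intro j; exact ⟨_, _, rfl⟩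
  · -- disjointness
    have key : ∀ j j' : Fin k, j.val < j'.val →
        Disjoint (Finset.Icc (f j.val + 1) (f (j.val + 1)))
          (Finset.Icc (f j'.val + 1) (f (j'.val + 1))) := by
      intro j j' hlt
      rw [Finset.disjoint_left]
      intro m hm hm'
      simp only [Finset.mem_Icc] at hm hm'
      have : f (j.val + 1) ≤ f j'.val := pf_mono x n k X (by omega)
      omega
    intro j j' hne
    rcases lt_or_gt_of_ne (fun h => hne (Fin.ext h) : j.val ≠ j'.val) with h | h
    · exact key j j' h
    · exact (key j' j h).symm
  · -- union
    ext m
    simp only [Finset.mem_biUnion, Finset.mem_univ, true_and, Finset.mem_Icc]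
    constructor
    · rintro ⟨j, hj1, hj2⟩
      have h1 : f (j.val + 1) ≤ f k := pf_mono x n k X (by omega)
      omega
    · rintro ⟨hm1, hmn⟩
      set j := Nat.findGreatest (fun j => f j < m) (k - 1) with hj
      have hjk : j ≤ k - 1 := Nat.findGreatest_le _
      have hjspec : f j < m := Nat.findGreatest_spec (P := fun j => f j < m)
        (Nat.zero_le _) (show f 0 < m by rw [hf0]; omega)
      refine ⟨⟨j, by omega⟩, ?_, ?_⟩ <;> simp only [Fin.val_mk]
      · omega
      · by_cases hcase : j = k - 1
        · have : f (j + 1) = n := by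
            rw [hcase, show k - 1 + 1 = k by omega]; exact hfk
          omega
        · have h7 := Nat.findGreatest_is_greatest (P := fun j => f j < m)
            (n := k - 1) (k := j + 1) (by omega) (by omega)
          simp only [not_lt] at h7
          exact h7
  · -- weight bound
    intro j
    have hab : f j.val ≤ f (j.val + 1) := pf_mono x n k X (by omega)
    have hkey : k * (pS x (f (j.val + 1)) - pS x (f j.val)) ≤ X + k * xb := by
      have h1 : k * pS x (f (j.val + 1)) ≤ (j.val + 1) * X := pf_spec x n k X _
      rw [Nat.add_mul, Nat.one_mul] at h1
      have h2 : j.val * X ≤ k * pS x (f j.val) + k * xb := by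
        by_cases hj0 : j.val = 0
        · simp [hj0]
        · by_cases hfn : f j.val < n
          · have h3 := pf_max x n k X hj0 hfn
            have h4 : pS x (f j.val + 1) = pS x (f j.val) + x (f j.val + 1) := pS_succ x _
            have h5 : x (f j.val + 1) ≤ xb := by
              apply hb; simp only [Finset.mem_Icc]; omega
            calc j.val * X ≤ k * pS x (f j.val + 1) := le_of_lt h3
              _ = k * pS x (f j.val) + k * x (f j.val + 1) := by rw [h4]; ring
              _ ≤ k * pS x (f j.val) + k * xb :=
                  Nat.add_le_add_left (Nat.mul_le_mul_left k h5) _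
          · have hfn' : f j.val = n := le_antisymm (pf_le x n k X _) (by omega)
            have h6 : k * pS x (f j.val) = k * X := by rw [hfn', hSn]
            have h8 : j.val * X ≤ k * X := Nat.mul_le_mul_right X (by omega)
            omega
      have hmono : pS x (f j.val) ≤ pS x (f (j.val + 1)) := by
        apply Finset.sum_le_sum_of_subset
        exact Finset.Ioc_subset_Ioc le_rfl hab
      have hd : k * (pS x (f (j.val + 1)) - pS x (f j.val)) + k * pS x (f j.val)
          = k * pS x (f (j.val + 1)) := by
        rw [← Nat.mul_add, Nat.sub_add_cancel hmono]
      omega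
    have hsumj : ∑ i ∈ Finset.Icc (f j.val + 1) (f (j.val + 1)), x i
        = pS x (f (j.val + 1)) - pS x (f j.val) := hsum _ _ hab
    have hcast : (∑ i ∈ Finset.Icc (f j.val + 1) (f (j.val + 1)), (x i : ℝ))
        = ((∑ i ∈ Finset.Icc (f j.val + 1) (f (j.val + 1)), x i : ℕ) : ℝ) := by
      push_cast; ring
    rw [hcast, hsumj]
    rw [div_add' _ _ _ (by positivity : (k : ℝ) ≠ 0),
      le_div_iff₀ (by positivity : (0:ℝ) < k)]
    calc ((pS x (f (j.val + 1)) - pS x (f j.val) : ℕ) : ℝ) * k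
        = ((k * (pS x (f (j.val + 1)) - pS x (f j.val)) : ℕ) : ℝ) := by push_cast; ring
      _ ≤ ((X + k * xb : ℕ) : ℝ) := by exact_mod_cast hkey
      _ = (X : ℝ) + (xb : ℝ) * k := by push_cast; ring
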